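/- Let ψ : ℝ → ℝ satisfy ψ(T) ≥ T for all sufficiently large T and ψ(T) − T ~ (1−γ) T / ln T as T → ∞, let c₀ ∈ ℝ and δ ∈ (0, 1/2), and suppose: (i) ∫₀^{ψ(T)} |ζ(1/2+it)|² dt = T ln T + (γ − ln 2π) T + c₀ + O(ln T / T) as T → ∞; (ii) ∫_T^{ψ(T)} |ζ(1/2+it)|² dt = (1−γ) T + O(T^{1/3+δ}) as T → ∞. Assume Dirichlet's estimate. Then for every fixed natural number r ≥ 1, D(ψ^r(T)) − D(ψ^{r−1}(T)) = ∫_{ψ^{r−1}(T)}^{ψ^r(T)} |ζ(1/2+it)|² dt + O(T / ln T) as T → ∞, where ψ^r denotes the r-fold iterate of ψ. -/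

import Mathlib

open Filter Asymptotics Real

/-- Dirichlet summatory divisor function `D(x) = ∑_{n ≤ x} d(n)`. -/
noncomputable def D (x : ℝ) : ℝ := ∑ n ∈ Finset.Icc 1 ⌊x⌋₊, ((Nat.divisors n).card : ℝ)

/-- `|ζ(1/2 + it)|²`. -/
noncomputable def zsq (t : ℝ) : ℝ := ‖riemannZeta (1/2 + t * Complex.I)‖ ^ 2

/-- `S₁(t) = (1/π) ∫₀ᵗ arg ζ(1/2 + iu) du`. -/
noncomputable def S1 (t : ℝ) : ℝ := (1 / Real.pi) * ∫ u in (0:ℝ)..t, (riemannZeta (1/2 + u * Complex.I)).arg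

/-- Euler–Mascheroni constant `γ`. -/
noncomputable def γ : ℝ := Real.eulerMascheroniConstant
lemma zsq_cont : Continuous zsq := by
  rw [continuous_iff_continuousAt]
  intro t
  have hne : (1/2 + (t:ℂ) * Complex.I) ≠ 1 := by
    intro h
    have := congrArg Complex.re h
    simp at this
  have h2 : ContinuousAt (fun u : ℝ => (1/2 + (u:ℂ) * Complex.I)) t := by fun_prop
  have h3 : ContinuousAt (fun u : ℝ => riemannZeta (1/2 + u * Complex.I)) t :=
    ContinuousAt.comp (differentiableAt_riemannZeta hne).continuousAt h2
  have h4 : ContinuousAt (fun u : ℝ => ‖riemannZeta (1/2 + u * Complex.I)‖) t :=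
    ContinuousAt.comp continuous_norm.continuousAt h3
  exact h4.pow 2

lemma zsq_int (a b : ℝ) : IntervalIntegrable zsq MeasureTheory.volume a b :=
  zsq_cont.intervalIntegrable a b

lemma sqrt_bigO : (fun T : ℝ => Real.sqrt T) =O[atTop] (fun T : ℝ => T / Real.log T) := by
  refine IsBigO.of_bound 2 ?_
  filter_upwards [eventually_ge_atTop (Real.exp 1)] with T hT
  have hT1 : (1:ℝ) ≤ T := le_trans (by nlinarith [Real.exp_one_gt_d9]) hT
  have hT0 : (0:ℝ) < T := by linarith
  have hlog1 : 1 ≤ Real.log T := by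
    rw [← Real.log_exp 1]; exact Real.log_le_log (Real.exp_pos 1) hT
  have hlog0 : 0 < Real.log T := by linarith
  have hs : 0 ≤ Real.sqrt T := Real.sqrt_nonneg T
  rw [Real.norm_eq_abs, Real.norm_eq_abs, abs_of_nonneg hs,
    abs_of_nonneg (by positivity : (0:ℝ) ≤ T / Real.log T),
    show 2 * (T / Real.log T) = 2 * T / Real.log T by ring, le_div_iff₀ hlog0]
  have h1 : Real.log T ≤ 2 * Real.sqrt T := by
    have := Real.log_le_sub_one_of_pos (Real.sqrt_pos.mpr hT0)
    have hsq : Real.log (Real.sqrt T) = Real.log T / 2 := Real.log_sqrt hT0.le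
    nlinarith [Real.sqrt_nonneg T]
  nlinarith [Real.sq_sqrt hT0.le, Real.sqrt_nonneg T]

lemma log_ge_one {T : ℝ} (hT : Real.exp 1 ≤ T) : 1 ≤ Real.log T := by
  rw [← Real.log_exp 1]; exact Real.log_le_log (Real.exp_pos 1) hT

lemma T_pos {T : ℝ} (hT : Real.exp 1 ≤ T) : (1:ℝ) ≤ T :=
  le_trans (by nlinarith [Real.exp_one_gt_d9]) hT

lemma rpow_bigO {e : ℝ} (he0 : 0 < e) (he1 : e < 1) :
    (fun T : ℝ => T ^ e) =O[atTop] (fun T : ℝ => T / Real.log T) := by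
  refine IsBigO.of_bound (1/(1-e)) ?_
  filter_upwards [eventually_ge_atTop (Real.exp 1)] with T hT
  have hT1 := T_pos hT
  have hT0 : (0:ℝ) < T := by linarith
  have hlog0 : 0 < Real.log T := by linarith [log_ge_one hT]
  have hrp : 0 ≤ T ^ e := Real.rpow_nonneg hT0.le e
  rw [Real.norm_eq_abs, Real.norm_eq_abs, abs_of_nonneg hrp,
    abs_of_nonneg (by positivity : (0:ℝ) ≤ T / Real.log T),
    show 1/(1-e) * (T / Real.log T) = T/(1-e) / Real.log T by ring, le_div_iff₀ hlog0]
  have h1 : Real.log T ≤ T ^ (1-e) / (1-e) := Real.log_le_rpow_div hT0.le (by linarith)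
  calc T ^ e * Real.log T ≤ T ^ e * (T ^ (1-e) / (1-e)) := by
        exact mul_le_mul_of_nonneg_left h1 hrp
    _ = T / (1-e) := by rw [mul_div_assoc', ← Real.rpow_add hT0]; norm_num

lemma logdiv_bigO {e : ℝ} (he0 : 0 < e) :
    (fun T : ℝ => Real.log T / T) =O[atTop] (fun T : ℝ => T ^ e) := by
  refine IsBigO.of_bound 1 ?_
  filter_upwards [eventually_ge_atTop 1] with T hT
  have hT0 : (0:ℝ) < T := by linarith
  have hlog0 : 0 ≤ Real.log T := Real.log_nonneg hT
  have hle : Real.log T ≤ T := (Real.log_le_sub_one_of_pos hT0).trans (by linarith)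
  rw [Real.norm_eq_abs, Real.norm_eq_abs, abs_of_nonneg (by positivity),
    abs_of_nonneg (Real.rpow_nonneg hT0.le e), one_mul]
  calc Real.log T / T ≤ 1 := by rw [div_le_one hT0]; exact hle
    _ ≤ T ^ e := Real.one_le_rpow hT he0.le

lemma comp_transfer {f g : ℝ → ℝ} (hg : Tendsto g atTop atTop)
    (h1 : ∀ᶠ T in atTop, T ≤ g T) (h2 : ∀ᶠ T in atTop, g T ≤ 2 * T)
    (hf : f =O[atTop] fun T => T / Real.log T) :
    (fun T => f (g T)) =O[atTop] fun T : ℝ => T / Real.log T := by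
  have h := hf.comp_tendsto hg
  refine IsBigO.trans h (IsBigO.of_bound 2 ?_)
  filter_upwards [h1, h2, eventually_ge_atTop (Real.exp 1)] with T hT1 hT2 hT3
  have hT0 : (0:ℝ) < T := by linarith [T_pos hT3]
  have hlog1 : 1 ≤ Real.log T := log_ge_one hT3
  have hlogg : Real.log T ≤ Real.log (g T) := Real.log_le_log hT0 hT1
  have hlogg0 : 0 < Real.log (g T) := by linarith
  have hg0 : 0 < g T := by linarith
  simp only [Function.comp, Real.norm_eq_abs]
  rw [abs_of_nonneg (by positivity : (0:ℝ) ≤ g T / Real.log (g T)),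
    abs_of_nonneg (by positivity : (0:ℝ) ≤ T / Real.log T)]
  calc g T / Real.log (g T) ≤ g T / Real.log T := by
        exact div_le_div_of_nonneg_left hg0.le (by linarith) hlogg
    _ ≤ 2 * T / Real.log T := by
        exact div_le_div_of_nonneg_right hT2 (by linarith)
    _ = 2 * (T / Real.log T) := by ring

lemma le_two_mul {g : ℝ → ℝ} (hO : (fun T => g T - T) =O[atTop] fun T : ℝ => T / Real.log T) :
    ∀ᶠ T in atTop, g T ≤ 2 * T := by
  obtain ⟨C, hC⟩ := hO.isBigOWith
  rw [IsBigOWith] at hC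
  filter_upwards [hC, Real.tendsto_log_atTop.eventually_ge_atTop (max C 1),
    eventually_ge_atTop 1] with T h1 h2 h3
  have hT0 : (0:ℝ) < T := by linarith
  have hlog0 : (0:ℝ) < Real.log T := lt_of_lt_of_le (by norm_num) ((le_max_right C 1).trans h2)
  have hd : T / Real.log T ≤ T / max C 1 :=
    div_le_div_of_nonneg_left hT0.le (lt_of_lt_of_le (by norm_num) (le_max_right C 1)) h2
  have : g T - T ≤ C * (T / Real.log T) := by
    have h1' := h1
    rw [Real.norm_eq_abs, Real.norm_eq_abs,
      abs_of_nonneg (div_nonneg hT0.le hlog0.le)] at h1'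
    exact (le_abs_self _).trans h1'
  have h4 : C * (T / Real.log T) ≤ max C 1 * (T / max C 1) := by
    have hx : 0 ≤ T / Real.log T := by positivity
    calc C * (T / Real.log T) ≤ max C 1 * (T / Real.log T) :=
          mul_le_mul_of_nonneg_right (le_max_left C 1) hx
      _ ≤ max C 1 * (T / max C 1) :=
          mul_le_mul_of_nonneg_left hd (le_trans (by norm_num) (le_max_right C 1))
  have h5 : max C 1 * (T / max C 1) = T := by
    field_simp
  linarith

/-- Lemma 1: `D(ψ^r(T)) − D(ψ^{r−1}(T)) = ∫_{ψ^{r−1}(T)}^{ψ^r(T)} |ζ(1/2+it)|² dt + O(T/ln T)`. -/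
theorem D_increment_iterates (ψ : ℝ → ℝ) (c₀ δ : ℝ) (hδ : 0 < δ) (hδ2 : δ < 1/2)
    (hge : ∀ᶠ T : ℝ in atTop, T ≤ ψ T)
    (hsim : Tendsto (fun T : ℝ => (ψ T - T) / ((1 - γ) * T / Real.log T)) atTop (nhds 1))
    (hHL : (fun T : ℝ => (∫ t in (0:ℝ)..ψ T, zsq t) -
        (T * Real.log T + (γ - Real.log (2 * Real.pi)) * T + c₀)) =O[atTop]
      (fun T : ℝ => Real.log T / T))
    (hint : (fun T : ℝ => (∫ t in T..ψ T, zsq t) - (1 - γ) * T) =O[atTop]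
      (fun T : ℝ => T ^ ((1:ℝ)/3 + δ)))
    (hDir : (fun T : ℝ => D T - (T * Real.log T + (2 * γ - 1) * T)) =O[atTop]
      (fun T : ℝ => Real.sqrt T)) :
    ∀ r : ℕ, 1 ≤ r →
      (fun T : ℝ => D (ψ^[r] T) - D (ψ^[r-1] T) - ∫ t in ψ^[r-1] T..ψ^[r] T, zsq t)
        =O[atTop] (fun T : ℝ => T / Real.log T) := by
  have he0 : 0 < (1:ℝ)/3 + δ := by linarith
  have he1 : (1:ℝ)/3 + δ < 1 := by linarith
  have hγ2 : γ < 2/3 := Real.eulerMascheroniConstant_lt_two_thirds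
  have hγ : (1:ℝ) - γ ≠ 0 := ne_of_gt (by linarith)
  have hψtop : Tendsto ψ atTop atTop := tendsto_atTop_mono' atTop hge tendsto_id
  -- ε = ψ T - T is O(T / log T)
  have hεO : (fun T => ψ T - T) =O[atTop] (fun T : ℝ => T / Real.log T) := by
    have hle : ∀ᶠ T in atTop, |(ψ T - T) / ((1-γ)*T/Real.log T)| ≤ 2 := by
      have h1 := hsim.eventually (eventually_le_nhds (show (1:ℝ) < 2 by norm_num))
      have h2 := hsim.eventually (eventually_ge_nhds (show (-2:ℝ) < 1 by norm_num))
      filter_upwards [h1, h2] with T hA hB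
      rw [abs_le]; exact ⟨hB, hA⟩
    refine IsBigO.of_bound (2 * |1-γ|) ?_
    filter_upwards [hle, eventually_ge_atTop (Real.exp 1)] with T h1 h2
    have hT0 : (0:ℝ) < T := by linarith [T_pos h2]
    have hlog0 : 0 < Real.log T := by linarith [log_ge_one h2]
    have hd : (1-γ)*T/Real.log T ≠ 0 :=
      div_ne_zero (mul_ne_zero hγ (ne_of_gt hT0)) (ne_of_gt hlog0)
    rw [abs_div, div_le_iff₀ (abs_pos.mpr hd)] at h1
    rw [Real.norm_eq_abs, Real.norm_eq_abs]
    calc |ψ T - T| ≤ 2 * |(1-γ)*T/Real.log T| := h1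
      _ = 2*|1-γ| * |T/Real.log T| := by
          rw [show (1-γ)*T/Real.log T = (1-γ)*(T/Real.log T) by ring, abs_mul]; ring
  have h2ψ : ∀ᶠ T in atTop, ψ T ≤ 2 * T := le_two_mul hεO
  have hadd : ∀ a b : ℝ, (∫ t in a..b, zsq t)
      = (∫ t in (0:ℝ)..b, zsq t) - ∫ t in (0:ℝ)..a, zsq t := by
    intro a b
    rw [← intervalIntegral.integral_add_adjacent_intervals (zsq_int 0 a) (zsq_int a b)]
    ring
  have hB : (fun T => (∫ t in (0:ℝ)..T, zsq t) -
      (T * Real.log T + (γ - Real.log (2*Real.pi) - (1-γ))*T + c₀))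
      =O[atTop] (fun T : ℝ => T ^ ((1:ℝ)/3+δ)) := by
    refine ((hHL.trans (logdiv_bigO he0)).sub hint).congr'
      (Filter.Eventually.of_forall fun T => ?_) EventuallyEq.rfl
    dsimp only; rw [hadd T (ψ T)]; ring
  have hC : (fun T => (∫ t in (0:ℝ)..ψ T, zsq t) -
      (ψ T * Real.log (ψ T) + (γ - Real.log (2*Real.pi) - (1-γ))*ψ T + c₀))
      =O[atTop] (fun T : ℝ => T ^ ((1:ℝ)/3+δ)) := by
    refine (hB.comp_tendsto hψtop).trans (IsBigO.of_bound 2 ?_)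
    filter_upwards [hge, h2ψ, eventually_ge_atTop 1] with T h1 h2 h3
    have hT0 : (0:ℝ) < T := by linarith
    have hψ0 : (0:ℝ) ≤ ψ T := by linarith
    simp only [Function.comp, Real.norm_eq_abs]
    rw [abs_of_nonneg (Real.rpow_nonneg hψ0 _), abs_of_nonneg (Real.rpow_nonneg hT0.le _)]
    calc ψ T ^ ((1:ℝ)/3+δ) ≤ (2*T) ^ ((1:ℝ)/3+δ) := Real.rpow_le_rpow hψ0 h2 he0.le
      _ = 2 ^ ((1:ℝ)/3+δ) * T ^ ((1:ℝ)/3+δ) := Real.mul_rpow (by norm_num) hT0.le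
      _ ≤ 2 * T ^ ((1:ℝ)/3+δ) := by
          refine mul_le_mul_of_nonneg_right ?_ (Real.rpow_nonneg hT0.le _)
          calc (2:ℝ) ^ ((1:ℝ)/3+δ) ≤ 2 ^ (1:ℝ) :=
                Real.rpow_le_rpow_of_exponent_le one_le_two he1.le
            _ = 2 := Real.rpow_one 2
  have hD2 : (fun T => (ψ T * Real.log (ψ T) + (γ - Real.log (2*Real.pi) - (1-γ)) * ψ T)
      - (T * Real.log T + (γ - Real.log (2*Real.pi)) * T))
      =O[atTop] (fun T : ℝ => T ^ ((1:ℝ)/3+δ)) := by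
    refine ((hHL.trans (logdiv_bigO he0)).sub hC).congr'
      (Filter.Eventually.of_forall fun T => ?_) EventuallyEq.rfl
    ring
  have G1 : (fun T => ψ T * (Real.log (ψ T) - Real.log T)) =O[atTop]
      (fun T : ℝ => T / Real.log T) := by
    refine IsBigO.trans (IsBigO.of_bound 2 ?_) hεO
    filter_upwards [hge, h2ψ, eventually_ge_atTop 1] with T h1 h2 h3
    have hT0 : (0:ℝ) < T := by linarith
    have hψ0 : (0:ℝ) < ψ T := by linarith
    have hll : Real.log (ψ T) - Real.log T = Real.log (ψ T / T) :=
      (Real.log_div (ne_of_gt hψ0) (ne_of_gt hT0)).symm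
    have h4 : 0 ≤ Real.log (ψ T) - Real.log T := by
      have := Real.log_le_log hT0 h1; linarith
    have h5 : Real.log (ψ T / T) ≤ ψ T / T - 1 :=
      Real.log_le_sub_one_of_pos (by positivity)
    rw [Real.norm_eq_abs, Real.norm_eq_abs, abs_of_nonneg (mul_nonneg hψ0.le h4),
      abs_of_nonneg (by linarith : (0:ℝ) ≤ ψ T - T)]
    calc ψ T * (Real.log (ψ T) - Real.log T) ≤ 2*T * (ψ T / T - 1) := by
          rw [hll]
          refine mul_le_mul h2 h5 (by rw [← hll]; exact h4) (by linarith)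
      _ = 2 * (ψ T - T) := by field_simp
  have hE : (fun T => (ψ T - T) * Real.log T - (1-γ)*T) =O[atTop]
      (fun T : ℝ => T / Real.log T) := by
    refine (((hD2.trans (rpow_bigO he0 he1)).sub G1).sub
      (hεO.const_mul_left (γ - Real.log (2*Real.pi) - (1-γ)))).congr'
      (Filter.Eventually.of_forall fun T => ?_) EventuallyEq.rfl
    ring
  have A3 : (fun T => (ψ T * Real.log (ψ T) + (2*γ-1)*ψ T)
      - (T*Real.log T + (2*γ-1)*T) - (1-γ)*T) =O[atTop]
      (fun T : ℝ => T / Real.log T) := by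
    refine ((hE.add G1).add (hεO.const_mul_left (2*γ-1))).congr'
      (Filter.Eventually.of_forall fun T => ?_) EventuallyEq.rfl
    ring
  have key : (fun T => D (ψ T) - D T - ∫ t in T..ψ T, zsq t) =O[atTop]
      (fun T : ℝ => T / Real.log T) := by
    have hDir' := hDir.trans sqrt_bigO
    have hDirψ : (fun T => D (ψ T) - (ψ T * Real.log (ψ T) + (2*γ-1)*ψ T)) =O[atTop]
        (fun T : ℝ => T / Real.log T) :=
      comp_transfer hψtop hge h2ψ hDir'
    refine (((hDirψ.sub hDir').add A3).sub (hint.trans (rpow_bigO he0 he1))).congr'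
      (Filter.Eventually.of_forall fun T => ?_) EventuallyEq.rfl
    ring
  have iter : ∀ k : ℕ, Tendsto (ψ^[k]) atTop atTop ∧ (∀ᶠ T in atTop, T ≤ ψ^[k] T) ∧
      (fun T => ψ^[k] T - T) =O[atTop] (fun T : ℝ => T / Real.log T) := by
    intro k
    induction k with
    | zero =>
      refine ⟨tendsto_id, Filter.Eventually.of_forall fun T => le_refl _, ?_⟩
      simp only [Function.iterate_zero, id, sub_self]
      exact isBigO_zero _ _
    | succ k ih =>
      obtain ⟨ht, h1, hO⟩ := ih
      have h2 := le_two_mul hO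
      refine ⟨?_, ?_, ?_⟩
      · rw [Function.iterate_succ']; exact hψtop.comp ht
      · filter_upwards [h1, ht.eventually hge] with T hA hB
        rw [Function.iterate_succ_apply']
        exact hA.trans hB
      · refine ((comp_transfer ht h1 h2 hεO).add hO).congr'
          (Filter.Eventually.of_forall fun T => ?_) EventuallyEq.rfl
        simp only [Function.iterate_succ_apply']; ring
  intro r hr
  obtain ⟨k, rfl⟩ : ∃ k, r = k + 1 := ⟨r - 1, (Nat.succ_pred_eq_of_pos hr).symm⟩
  obtain ⟨ht, h1, hO⟩ := iter k
  simp only [Nat.add_sub_cancel, Function.iterate_succ_apply']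
  exact comp_transfer ht h1 (le_two_mul hO) key
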